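/- Let V be a finite-dimensional real inner product space, T : V → V a symmetric linear endomorphism, N : V → V a nilpotent linear endomorphism with T N = N T, and μ > 0. Let W be the span of all eigenvectors of T whose eigenvalues are ≤ −μ (note that N maps W into W, since N commutes with T). Then there exists a constant c > 0 such that for every Y ∈ W and every t ≥ 0 one has ‖exp(t T) exp(t N) Y‖ ≤ c e^{−(μ/2) t} ‖Y‖. -/

import Mathlib

open Filter Topology NormedSpace

set_option synthInstance.maxHeartbeats 1000000

section Aux
variable {V : Type*} [NormedAddCommGroup V] [InnerProductSpace ℝ V] [FiniteDimensional ℝ V]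

lemma exp_smul_apply_eigen (T : V →L[ℝ] V) {v : V} {a : ℝ} (hv : T v = a • v) (t : ℝ) :
    exp (t • T) v = Real.exp (t * a) • v := by
  have hpow : ∀ n : ℕ, ((t • T) ^ n) v = (t * a) ^ n • v := by
    intro n; induction n with
    | zero => simp
    | succ n ih =>
      rw [pow_succ, ContinuousLinearMap.mul_apply, ContinuousLinearMap.smul_apply, hv,
        smul_smul, map_smul, ih, smul_smul, pow_succ]
      ring_nf
  have h1 : exp (t • T) v = ∑' n : ℕ, (((Nat.factorial n : ℝ))⁻¹ • (t • T) ^ n) v := by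
    rw [exp_eq_tsum ℝ]
    exact ((ContinuousLinearMap.apply ℝ V v).map_tsum (expSeries_summable' (t • T)))
  rw [h1]
  have h2 : ∀ n : ℕ, (((Nat.factorial n : ℝ))⁻¹ • (t • T) ^ n) v = (((Nat.factorial n : ℝ))⁻¹ * (t * a) ^ n) • v := by
    intro n
    rw [ContinuousLinearMap.smul_apply, hpow, smul_smul]
  simp_rw [h2]
  have hs : Summable fun n : ℕ => ((Nat.factorial n : ℝ))⁻¹ * (t * a) ^ n := by
    simpa [smul_eq_mul] using expSeries_summable' (𝕂 := ℝ) (t * a)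
  rw [hs.tsum_smul_const]
  congr 1
  rw [Real.exp_eq_exp_ℝ, exp_eq_tsum ℝ]
  simp [smul_eq_mul]

lemma exp_contraction_on_span (T : V →L[ℝ] V)
    (hT : ∀ x y : V, (inner ℝ (T x) y : ℝ) = inner ℝ x (T y)) (μ : ℝ) (hμ : 0 < μ)
    {x : V} (hx : x ∈ Submodule.span ℝ {v : V | ∃ a : ℝ, a ≤ -μ ∧ T v = a • v})
    {t : ℝ} (ht : 0 ≤ t) :
    ‖exp (t • T) x‖ ≤ Real.exp (-μ * t) * ‖x‖ := by
  have hT' : (T : V →ₗ[ℝ] V).IsSymmetric := fun u w => hT u w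
  have hnn : Module.finrank ℝ V = Module.finrank ℝ V := rfl
  set b := hT'.eigenvectorBasis hnn with hbdef
  set lam := hT'.eigenvalues hnn with hlamdef
  have hb : ∀ i, T (b i) = lam i • b i := fun i => hT'.apply_eigenvectorBasis hnn i
  -- orthogonality to high eigenvectors
  have horth : ∀ i, -μ < lam i → (inner ℝ (b i) x : ℝ) = 0 := by
    intro i hi
    induction hx using Submodule.span_induction with
    | mem v hv =>
      obtain ⟨a, ha, hva⟩ := hv
      have h1 : (inner ℝ (T (b i)) v : ℝ) = inner ℝ (b i) (T v) := hT _ _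
      rw [hb, hva, real_inner_smul_left, real_inner_smul_right] at h1
      have h2 : (lam i - a) * (inner ℝ (b i) v : ℝ) = 0 := by linarith
      have h3 : lam i - a ≠ 0 := by intro h; linarith
      exact (mul_eq_zero.mp h2).resolve_left h3
    | zero => simp
    | add u w _ _ hu hw => rw [inner_add_right, hu, hw]; ring
    | smul r u _ hu => rw [real_inner_smul_right, hu]; ring
  set c : Fin (Module.finrank ℝ V) → ℝ := fun i => (inner ℝ (b i) x : ℝ) with hcdef
  have hxsum : x = ∑ i, c i • b i := (b.sum_repr' x).symm
  set d : Fin (Module.finrank ℝ V) → ℝ := fun i => Real.exp (t * lam i) * c i with hddef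
  have hexp : exp (t • T) x = ∑ i, d i • b i := by
    rw [hxsum, map_sum]
    refine Finset.sum_congr rfl fun i _ => ?_
    rw [map_smul, exp_smul_apply_eigen T (hb i) t, smul_smul, hddef]
    simp [mul_comm]
  have hnorm1 : ‖exp (t • T) x‖ ^ 2 = ∑ i, d i ^ 2 := by
    rw [hexp, ← real_inner_self_eq_norm_sq, b.orthonormal.inner_sum d d]
    simp [starRingEnd_apply, sq]
  have hnorm2 : ‖x‖ ^ 2 = ∑ i, c i ^ 2 := by
    conv_lhs => rw [hxsum]
    rw [← real_inner_self_eq_norm_sq, b.orthonormal.inner_sum c c]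
    simp [starRingEnd_apply, sq]
  have hterm : ∀ i, d i ^ 2 ≤ (Real.exp (-μ * t)) ^ 2 * c i ^ 2 := by
    intro i
    rcases eq_or_ne (c i) 0 with h | h
    · simp [hddef, h]
    · have hlam : lam i ≤ -μ := by
        by_contra hcon
        exact h (horth i (lt_of_not_ge hcon))
      have he : Real.exp (t * lam i) ≤ Real.exp (-μ * t) := by
        apply Real.exp_le_exp.mpr
        rw [mul_comm]
        exact mul_le_mul_of_nonneg_right hlam ht |>.trans_eq (by ring) |>.trans_eq rfl
      have he0 : (0:ℝ) ≤ Real.exp (t * lam i) := (Real.exp_pos _).le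
      have := mul_le_mul he he he0 (Real.exp_pos _).le
      calc d i ^ 2 = Real.exp (t * lam i) ^ 2 * c i ^ 2 := by rw [hddef]; ring
        _ ≤ (Real.exp (-μ * t)) ^ 2 * c i ^ 2 := by
            apply mul_le_mul_of_nonneg_right _ (sq_nonneg _)
            rw [sq, sq]; exact this
  have hsq : ‖exp (t • T) x‖ ^ 2 ≤ (Real.exp (-μ * t) * ‖x‖) ^ 2 := by
    rw [hnorm1, mul_pow, hnorm2, Finset.mul_sum]
    exact Finset.sum_le_sum fun i _ => hterm i
  have h1 : (0:ℝ) ≤ Real.exp (-μ * t) * ‖x‖ := by positivity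
  have := Real.sqrt_le_sqrt hsq
  rwa [Real.sqrt_sq (norm_nonneg _), Real.sqrt_sq h1] at this

lemma pow_le_factorial_mul_exp {s : ℝ} (hs : 0 ≤ s) (k : ℕ) :
    s ^ k ≤ (Nat.factorial k : ℝ) * Real.exp s := by
  have h1 : s ^ k / (Nat.factorial k : ℝ) ≤ Real.exp s := by
    calc s ^ k / (Nat.factorial k : ℝ)
        ≤ ∑ i ∈ Finset.range (k + 1), s ^ i / (Nat.factorial i : ℝ) := by
          refine Finset.single_le_sum (f := fun i => s ^ i / (Nat.factorial i : ℝ))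
            (fun i _ => by positivity) (by simp)
      _ ≤ Real.exp s := Real.sum_le_exp_of_nonneg hs _
  have hfac : (0:ℝ) < (Nat.factorial k : ℝ) := by
    exact_mod_cast Nat.factorial_pos k
  rw [div_le_iff₀ hfac] at h1
  linarith [h1]

end Aux

/-- If `T` is symmetric, `N` is nilpotent and commutes with `T`, and `W` is the span of the
eigenvectors of `T` with eigenvalues `≤ -μ`, then `exp(tT) exp(tN)` decays on `W` at
exponential rate `μ/2`. -/
theorem exp_hyperbolic_unipotent_decay
    {V : Type*} [NormedAddCommGroup V] [InnerProductSpace ℝ V] [FiniteDimensional ℝ V]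
    (T N : V →L[ℝ] V)
    (hT : ∀ x y : V, (inner ℝ (T x) y : ℝ) = inner ℝ x (T y))
    (hNnil : ∃ m : ℕ, N ^ m = 0)
    (hcomm : T * N = N * T)
    (μ : ℝ) (hμ : 0 < μ) :
    ∃ c : ℝ, 0 < c ∧
      ∀ Y ∈ Submodule.span ℝ {v : V | ∃ a : ℝ, a ≤ -μ ∧ T v = a • v},
        ∀ t : ℝ, 0 ≤ t →
          ‖exp (t • T) (exp (t • N) Y)‖ ≤ c * Real.exp (-(μ / 2) * t) * ‖Y‖ := by
  obtain ⟨m, hm⟩ := hNnil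
  set S := {v : V | ∃ a : ℝ, a ≤ -μ ∧ T v = a • v} with hS
  set W := Submodule.span ℝ S with hWdef
  have hNS : ∀ v ∈ S, N v ∈ S := by
    rintro v ⟨a, ha, hva⟩
    refine ⟨a, ha, ?_⟩
    have h1 : T (N v) = N (T v) := by
      have := congrArg (fun f : V →L[ℝ] V => f v) hcomm
      simpa using this
    rw [h1, hva, map_smul]
  have hNW : ∀ y ∈ W, N y ∈ W := by
    intro y hy
    induction hy using Submodule.span_induction with
    | mem v hv => exact Submodule.subset_span (hNS v hv)
    | zero => simp
    | add u w _ _ hu hw => rw [map_add]; exact W.add_mem hu hw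
    | smul r u _ hu => rw [map_smul]; exact W.smul_mem r hu
  have hNkW : ∀ k : ℕ, ∀ y ∈ W, (N ^ k) y ∈ W := by
    intro k
    induction k with
    | zero => intro y hy; simpa using hy
    | succ k ih =>
      intro y hy
      rw [pow_succ, ContinuousLinearMap.mul_apply]
      exact ih _ (hNW y hy)
  have hNk_norm : ∀ k : ℕ, ∀ y : V, ‖(N ^ k) y‖ ≤ ‖N‖ ^ k * ‖y‖ := by
    intro k
    induction k with
    | zero => intro y; simp
    | succ k ih =>
      intro y
      rw [pow_succ, ContinuousLinearMap.mul_apply]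
      calc ‖(N ^ k) (N y)‖ ≤ ‖N‖ ^ k * ‖N y‖ := ih _
        _ ≤ ‖N‖ ^ k * (‖N‖ * ‖y‖) :=
            mul_le_mul_of_nonneg_left (N.le_opNorm y) (by positivity)
        _ = ‖N‖ ^ (k + 1) * ‖y‖ := by ring
  have hexpN : ∀ (t : ℝ) (y : V), exp (t • N) y =
      ∑ k ∈ Finset.range m, (((Nat.factorial k : ℝ))⁻¹ * t ^ k) • (N ^ k) y := by
    intro t y
    have h1 : exp (t • N) y = ∑' k : ℕ, (((Nat.factorial k : ℝ))⁻¹ • (t • N) ^ k) y := by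
      rw [exp_eq_tsum ℝ]
      exact ((ContinuousLinearMap.apply ℝ V y).map_tsum (expSeries_summable' (t • N)))
    rw [h1, tsum_eq_sum (s := Finset.range m) ?_]
    · refine Finset.sum_congr rfl fun k _ => ?_
      rw [smul_pow, smul_smul, ContinuousLinearMap.smul_apply]
    · intro k hk
      have hk' : m ≤ k := by simpa using hk
      have hz : N ^ k = 0 := by
        rw [← Nat.add_sub_cancel' hk', pow_add, hm, zero_mul]
      rw [smul_pow, hz]
      simp
  refine ⟨(∑ k ∈ Finset.range m, (2 * ‖N‖ / μ) ^ k) + 1, by positivity, ?_⟩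
  intro Y hY t ht
  have key : ∀ k : ℕ, ((Nat.factorial k : ℝ))⁻¹ * t ^ k * (Real.exp (-μ * t) * (‖N‖ ^ k * ‖Y‖))
      ≤ (2 * ‖N‖ / μ) ^ k * (Real.exp (-(μ / 2) * t) * ‖Y‖) := by
    intro k
    have hfac : (0:ℝ) < (Nat.factorial k : ℝ) := by exact_mod_cast Nat.factorial_pos k
    have hs : 0 ≤ μ / 2 * t := by positivity
    have h1 : (μ / 2 * t) ^ k ≤ (Nat.factorial k : ℝ) * Real.exp (μ / 2 * t) :=
      pow_le_factorial_mul_exp hs k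
    have h2 : t ^ k ≤ (Nat.factorial k : ℝ) * Real.exp (μ / 2 * t) * (2 / μ) ^ k := by
      have he : t ^ k = (μ / 2 * t) ^ k * (2 / μ) ^ k := by
        rw [← mul_pow]
        congr 1
        field_simp
      rw [he]
      exact mul_le_mul_of_nonneg_right h1 (by positivity)
    have h3 : ((Nat.factorial k : ℝ))⁻¹ * t ^ k ≤ Real.exp (μ / 2 * t) * (2 / μ) ^ k := by
      rw [inv_mul_le_iff₀ hfac]
      calc t ^ k ≤ (Nat.factorial k : ℝ) * Real.exp (μ / 2 * t) * (2 / μ) ^ k := h2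
        _ = (Nat.factorial k : ℝ) * (Real.exp (μ / 2 * t) * (2 / μ) ^ k) := by ring
    have h4 : Real.exp (μ / 2 * t) * Real.exp (-μ * t) = Real.exp (-(μ / 2) * t) := by
      rw [← Real.exp_add]; ring_nf
    have h5 : (2 / μ) ^ k * ‖N‖ ^ k = (2 * ‖N‖ / μ) ^ k := by
      rw [← mul_pow]; congr 1; ring
    calc ((Nat.factorial k : ℝ))⁻¹ * t ^ k * (Real.exp (-μ * t) * (‖N‖ ^ k * ‖Y‖))
        ≤ Real.exp (μ / 2 * t) * (2 / μ) ^ k * (Real.exp (-μ * t) * (‖N‖ ^ k * ‖Y‖)) := by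
          apply mul_le_mul_of_nonneg_right h3 (by positivity)
      _ = ((2 / μ) ^ k * ‖N‖ ^ k) * ((Real.exp (μ / 2 * t) * Real.exp (-μ * t)) * ‖Y‖) := by ring
      _ = (2 * ‖N‖ / μ) ^ k * (Real.exp (-(μ / 2) * t) * ‖Y‖) := by rw [h4, h5]
  calc ‖exp (t • T) (exp (t • N) Y)‖
      = ‖∑ k ∈ Finset.range m, (((Nat.factorial k : ℝ))⁻¹ * t ^ k) • exp (t • T) ((N ^ k) Y)‖ := by
        rw [hexpN t Y, map_sum]
        congr 1
        exact Finset.sum_congr rfl fun k _ => map_smul (exp (t • T)) _ _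
    _ ≤ ∑ k ∈ Finset.range m, ‖(((Nat.factorial k : ℝ))⁻¹ * t ^ k) • exp (t • T) ((N ^ k) Y)‖ :=
        norm_sum_le _ _
    _ ≤ ∑ k ∈ Finset.range m, (2 * ‖N‖ / μ) ^ k * (Real.exp (-(μ / 2) * t) * ‖Y‖) := by
        refine Finset.sum_le_sum fun k _ => ?_
        rw [norm_smul, Real.norm_eq_abs]
        have habs : |((Nat.factorial k : ℝ))⁻¹ * t ^ k| = ((Nat.factorial k : ℝ))⁻¹ * t ^ k := by
          apply abs_of_nonneg; positivity
        rw [habs]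
        calc ((Nat.factorial k : ℝ))⁻¹ * t ^ k * ‖exp (t • T) ((N ^ k) Y)‖
            ≤ ((Nat.factorial k : ℝ))⁻¹ * t ^ k * (Real.exp (-μ * t) * ‖(N ^ k) Y‖) := by
              apply mul_le_mul_of_nonneg_left _ (by positivity)
              exact exp_contraction_on_span T hT μ hμ (hNkW k Y hY) ht
          _ ≤ ((Nat.factorial k : ℝ))⁻¹ * t ^ k * (Real.exp (-μ * t) * (‖N‖ ^ k * ‖Y‖)) := by
              apply mul_le_mul_of_nonneg_left _ (by positivity)
              exact mul_le_mul_of_nonneg_left (hNk_norm k Y) (Real.exp_pos _).le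
          _ ≤ (2 * ‖N‖ / μ) ^ k * (Real.exp (-(μ / 2) * t) * ‖Y‖) := key k
    _ = (∑ k ∈ Finset.range m, (2 * ‖N‖ / μ) ^ k) * (Real.exp (-(μ / 2) * t) * ‖Y‖) := by
        rw [Finset.sum_mul]
    _ ≤ ((∑ k ∈ Finset.range m, (2 * ‖N‖ / μ) ^ k) + 1) * (Real.exp (-(μ / 2) * t) * ‖Y‖) := by
        apply mul_le_mul_of_nonneg_right _ (by positivity)
        linarith
    _ = ((∑ k ∈ Finset.range m, (2 * ‖N‖ / μ) ^ k) + 1) * Real.exp (-(μ / 2) * t) * ‖Y‖ := by ring
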